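/- Suppose w i = 1 for all i, so that ⟨·,·⟩ is the standard inner product on ℂ^n and m = n. Let Φ be an orthogonal basis of ℂ^n such that φ_μ ∈ Φ for every character μ of H and μ ↦ φ_μ is injective, and set Φ₀ = Φ \ {φ_μ : μ ∈ Ĥ}. Then ∑_{φ ∈ Φ₀} ∑_{χ ∈ Ĝ} |P_χ(φ)|² / ⟨φ, φ⟩ = |G|² · (1 − |H|/n). (This is the paper's Corollary (cor:per-avg-bal)(i), the exact double average of squared periods over the cuspidal subspace for a balanced order, in the linear-algebra form in which it is proved, with H ≅ Cl⁺(N(𝒪̂)) and n = m(𝒪) the mass.) -/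

import Mathlib

open scoped Classical

private lemma auxNeZeroExp (G : Type*) [CommGroup G] [Fintype G] :
    NeZero (Monoid.exponent G) := ⟨Monoid.exponent_ne_zero_of_finite⟩

/-- Character values on a finite group have absolute value 1. -/
private lemma aux_char_abs {G : Type*} [CommGroup G] [Fintype G]
    (χ : G →* ℂˣ) (t : G) : ‖(χ t : ℂ)‖ = 1 := by
  have h1 : ((χ t : ℂ)) ^ Fintype.card G = 1 := by
    rw [← Units.val_pow_eq_pow_val, ← map_pow, pow_card_eq_one, map_one, Units.val_one]
  have h2 : ‖(χ t : ℂ)‖ ^ Fintype.card G = 1 := by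
    rw [← norm_pow, h1, norm_one]
  exact (pow_eq_one_iff_of_nonneg (norm_nonneg _) Fintype.card_ne_zero).mp h2

private lemma aux_char_conj {G : Type*} [CommGroup G] [Fintype G]
    (χ : G →* ℂˣ) (t : G) :
    (starRingEnd ℂ) ((χ t : ℂ)) = ((χ t : ℂ))⁻¹ :=
  (Complex.inv_eq_conj (aux_char_abs χ t)).symm

private lemma aux_card_dual (G : Type*) [CommGroup G] [Fintype G]
    [Fintype (G →* ℂˣ)] : Fintype.card (G →* ℂˣ) = Fintype.card G := by
  have : NeZero (Monoid.exponent G) := auxNeZeroExp G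
  obtain ⟨e⟩ := CommGroup.monoidHom_mulEquiv_of_hasEnoughRootsOfUnity G ℂ
  exact Fintype.card_congr e.toEquiv

/-- Orthogonality: sum of all character values at a fixed group element. -/
private lemma aux_char_sum {G : Type*} [CommGroup G] [Fintype G]
    [Fintype (G →* ℂˣ)] (g : G) :
    ∑ χ : G →* ℂˣ, ((χ g : ℂ)) = if g = 1 then (Fintype.card G : ℂ) else 0 := by
  by_cases hg : g = 1
  · simp [hg, aux_card_dual G]
  · have : NeZero (Monoid.exponent G) := auxNeZeroExp G
    obtain ⟨χ₀, hχ₀⟩ := CommGroup.exists_apply_ne_one_of_hasEnoughRootsOfUnity G ℂ hg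
    have hbij : Function.Bijective (fun χ : G →* ℂˣ => χ₀ * χ) :=
      Group.mulLeft_bijective χ₀
    have reindex : ∑ χ : G →* ℂˣ, (((χ₀ * χ) g : ℂ)) = ∑ χ : G →* ℂˣ, ((χ g : ℂ)) :=
      Fintype.sum_bijective _ hbij _ _ (fun χ => rfl)
    have key : ∑ χ : G →* ℂˣ, ((χ g : ℂ)) =
        (χ₀ g : ℂ) * ∑ χ : G →* ℂˣ, ((χ g : ℂ)) := by
      calc ∑ χ : G →* ℂˣ, ((χ g : ℂ))
          = ∑ χ : G →* ℂˣ, (((χ₀ * χ) g : ℂ)) := reindex.symm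
        _ = ∑ χ : G →* ℂˣ, ((χ₀ g : ℂ)) * ((χ g : ℂ)) :=
            Finset.sum_congr rfl fun χ _ => by rw [MonoidHom.mul_apply, Units.val_mul]
        _ = (χ₀ g : ℂ) * ∑ χ : G →* ℂˣ, ((χ g : ℂ)) := (Finset.mul_sum _ _ _).symm
    have hne : ((χ₀ g : ℂ)) ≠ 1 := fun hc =>
      hχ₀ (Units.ext (by rw [Units.val_one]; exact hc))
    rw [if_neg hg]
    have h2 : ((χ₀ g : ℂ) - 1) * ∑ χ : G →* ℂˣ, ((χ g : ℂ)) = 0 := by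
      linear_combination -key
    rcases mul_eq_zero.mp h2 with h | h
    · exact absurd (by linear_combination h) hne
    · exact h

private lemma aux_sq (z : ℂ) :
    ((‖z‖ : ℂ)) ^ 2 = z * (starRingEnd ℂ) z := by
  rw [Complex.mul_conj]
  norm_cast
  exact Complex.sq_norm z

/-- Diagonal resolution of the identity for an orthogonal spanning family. -/
private lemma aux_resolution {n : ℕ} (Φ : Finset (Fin n → ℂ))
    (hΦ0 : ∀ φ ∈ Φ, φ ≠ 0)
    (hΦorth : ∀ φ ∈ Φ, ∀ ψ ∈ Φ, φ ≠ ψ →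
      ∑ i, φ i * (starRingEnd ℂ) (ψ i) = 0)
    (hΦspan : Submodule.span ℂ (Φ : Set (Fin n → ℂ)) = ⊤) (i : Fin n) :
    ∑ φ ∈ Φ, ‖φ i‖ ^ 2 / (∑ k, ‖φ k‖ ^ 2) = 1 := by
  have hQreal : ∀ φ : Fin n → ℂ, (∑ k, φ k * (starRingEnd ℂ) (φ k)) =
      ((∑ k, ‖φ k‖ ^ 2 : ℝ) : ℂ) := by
    intro φ
    push_cast
    exact Finset.sum_congr rfl fun k _ => (aux_sq (φ k)).symm
  have hNpos : ∀ φ ∈ Φ, 0 < ∑ k, ‖φ k‖ ^ 2 := by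
    intro φ hφ
    obtain ⟨k, hk⟩ := Function.ne_iff.mp (hΦ0 φ hφ)
    refine Finset.sum_pos' (fun k _ => by positivity) ⟨k, Finset.mem_univ k, ?_⟩
    have : ‖φ k‖ ≠ 0 := by simpa using hk
    positivity
  have hQne : ∀ φ ∈ Φ, (∑ k, φ k * (starRingEnd ℂ) (φ k)) ≠ 0 := by
    intro φ hφ
    rw [hQreal]
    exact_mod_cast (hNpos φ hφ).ne'
  have hmem : (Pi.single i 1 : Fin n → ℂ) ∈ Submodule.span ℂ (Φ : Set (Fin n → ℂ)) := by
    rw [hΦspan]; trivial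
  obtain ⟨f, -, hf⟩ := Submodule.mem_span_finset.mp hmem
  have hcoef : ∀ ψ ∈ Φ, f ψ = (starRingEnd ℂ) (ψ i) / (∑ k, ψ k * (starRingEnd ℂ) (ψ k)) := by
    intro ψ hψ
    have h1 : ∑ k, (Pi.single i 1 : Fin n → ℂ) k * (starRingEnd ℂ) (ψ k)
        = (starRingEnd ℂ) (ψ i) := by
      rw [Finset.sum_eq_single i]
      · simp
      · intro b _ hb; simp [Pi.single_apply, hb]
      · simp
    have h2 : ∑ k, (Pi.single i 1 : Fin n → ℂ) k * (starRingEnd ℂ) (ψ k)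
        = f ψ * (∑ k, ψ k * (starRingEnd ℂ) (ψ k)) := by
      conv_lhs => rw [← hf]
      have hk : ∀ k, ((∑ φ ∈ Φ, f φ • φ) k) * (starRingEnd ℂ) (ψ k)
          = ∑ φ ∈ Φ, f φ * (φ k * (starRingEnd ℂ) (ψ k)) := by
        intro k
        rw [Finset.sum_apply, Finset.sum_mul]
        exact Finset.sum_congr rfl fun φ _ => by simp [mul_assoc]
      rw [Finset.sum_congr rfl fun k _ => hk k, Finset.sum_comm]
      rw [Finset.sum_eq_single ψ]
      · rw [Finset.mul_sum]
      · intro φ hφ hne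
        rw [← Finset.mul_sum, hΦorth φ hφ ψ hψ hne, mul_zero]
      · intro h; exact absurd hψ h
    rw [h1] at h2
    field_simp [hQne ψ hψ]
    linear_combination -h2
  have heval : ∑ φ ∈ Φ, f φ * φ i = 1 := by
    have := congrFun hf i
    simpa [Finset.sum_apply] using this
  apply Complex.ofReal_injective
  rw [Complex.ofReal_one, ← heval]
  push_cast
  refine Finset.sum_congr rfl fun φ hφ => ?_
  rw [hcoef φ hφ, hQreal φ, aux_sq (φ i)]
  push_cast
  ring

open scoped Classical in
theorem balanced_double_average_of_squared_periods
    (n : ℕ) (hn : 1 ≤ n)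
    (G : Type*) [CommGroup G] [Fintype G] [Fintype (G →* ℂˣ)]
    (H : Type*) [CommGroup H] [Fintype H] [Fintype (H →* ℂˣ)]
    (x : G → Fin n) (θ : G →* H) (ν : Fin n → H)
    (hν : ∀ t : G, ν (x t) = θ t)
    (Φ : Finset (Fin n → ℂ))
    (hΦ0 : ∀ φ ∈ Φ, φ ≠ 0)
    (hΦorth : ∀ φ ∈ Φ, ∀ ψ ∈ Φ, φ ≠ ψ →
      ∑ i, φ i * (starRingEnd ℂ) (ψ i) = 0)
    (hΦspan : Submodule.span ℂ (Φ : Set (Fin n → ℂ)) = ⊤)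
    (hEis : ∀ μ : H →* ℂˣ, (fun i => ((μ (ν i) : ℂ))) ∈ Φ)
    (hinj : Function.Injective (fun (μ : H →* ℂˣ) => (fun i => ((μ (ν i) : ℂ))))) :
    ∑ φ ∈ Φ.filter (fun φ => ∀ μ : H →* ℂˣ, φ ≠ fun i => ((μ (ν i) : ℂ))),
        ∑ χ : G →* ℂˣ,
          ‖∑ t : G, φ (x t) * ((χ t : ℂ))⁻¹‖ ^ 2 /
            (∑ i, ‖φ i‖ ^ 2)
      = (Fintype.card G : ℝ) ^ 2 * (1 - (Fintype.card H : ℝ) / n) := by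
  -- Step A: character-sum identity for each vector
  have key : ∀ φ : Fin n → ℂ,
      ∑ χ : G →* ℂˣ, ‖∑ t : G, φ (x t) * ((χ t : ℂ))⁻¹‖ ^ 2
        = (Fintype.card G : ℝ) * ∑ t : G, ‖φ (x t)‖ ^ 2 := by
    intro φ
    apply Complex.ofReal_injective
    push_cast
    have hPP : ∀ χ : G →* ℂˣ,
        ((‖∑ t : G, φ (x t) * ((χ t : ℂ))⁻¹‖ : ℂ)) ^ 2
          = ∑ t : G, ∑ s : G,
              (φ (x t) * (starRingEnd ℂ) (φ (x s))) * ((χ (t⁻¹ * s) : ℂ)) := by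
      intro χ
      rw [aux_sq, map_sum, Finset.sum_mul_sum]
      refine Finset.sum_congr rfl fun t _ => Finset.sum_congr rfl fun s _ => ?_
      rw [map_mul, map_inv₀, aux_char_conj, inv_inv]
      have hmul : ((χ (t⁻¹ * s) : ℂ)) = ((χ t : ℂ))⁻¹ * ((χ s : ℂ)) := by
        rw [map_mul, map_inv]
        simp [Units.val_mul]
      rw [hmul]; ring
    calc ∑ χ : G →* ℂˣ, ((‖∑ t : G, φ (x t) * ((χ t : ℂ))⁻¹‖ : ℂ)) ^ 2
        = ∑ t : G, ∑ s : G, (φ (x t) * (starRingEnd ℂ) (φ (x s)))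
            * ∑ χ : G →* ℂˣ, ((χ (t⁻¹ * s) : ℂ)) := by
          rw [Finset.sum_congr rfl fun χ _ => hPP χ, Finset.sum_comm]
          refine Finset.sum_congr rfl fun t _ => ?_
          rw [Finset.sum_comm]
          exact Finset.sum_congr rfl fun s _ => (Finset.mul_sum _ _ _).symm
      _ = ∑ t : G, (φ (x t) * (starRingEnd ℂ) (φ (x t))) * (Fintype.card G : ℂ) := by
          refine Finset.sum_congr rfl fun t _ => ?_
          rw [Finset.sum_congr rfl fun s _ => by rw [aux_char_sum (t⁻¹ * s)]]
          simp only [inv_mul_eq_one, mul_ite, mul_zero]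
          rw [Finset.sum_ite_eq Finset.univ t
            (fun s => (φ (x t) * (starRingEnd ℂ) (φ (x s))) * (Fintype.card G : ℂ))]
          simp
      _ = (Fintype.card G : ℂ) * ∑ t : G, ((‖φ (x t)‖ : ℂ)) ^ 2 := by
          rw [Finset.mul_sum]
          exact Finset.sum_congr rfl fun t _ => by rw [aux_sq]; ring
  have hEabs : ∀ (μ : H →* ℂˣ) (h : H), ‖(μ h : ℂ)‖ = 1 :=
    fun μ h => aux_char_abs μ h
  have hn' : (n : ℝ) ≠ 0 := by positivity
  set F : (Fin n → ℂ) → ℝ := fun φ =>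
    ∑ χ : G →* ℂˣ, ‖∑ t : G, φ (x t) * ((χ t : ℂ))⁻¹‖ ^ 2 /
      (∑ i, ‖φ i‖ ^ 2) with hF
  have hFval : ∀ φ : Fin n → ℂ, F φ =
      (Fintype.card G : ℝ) * ((∑ t : G, ‖φ (x t)‖ ^ 2) /
        (∑ i, ‖φ i‖ ^ 2)) := by
    intro φ
    rw [hF]
    simp only
    rw [← Finset.sum_div, key φ, mul_div_assoc]
  have htot : ∑ φ ∈ Φ, F φ = (Fintype.card G : ℝ) * (Fintype.card G : ℝ) := by
    rw [Finset.sum_congr rfl fun φ _ => hFval φ, ← Finset.mul_sum]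
    rw [Finset.sum_congr rfl fun φ _ => Finset.sum_div
      (Finset.univ) (fun t => ‖φ (x t)‖ ^ 2) _]
    rw [Finset.sum_comm]
    rw [Finset.sum_congr rfl fun t _ => aux_resolution Φ hΦ0 hΦorth hΦspan (x t)]
    simp [mul_comm]
  have hEisSum : ∀ μ : H →* ℂˣ, F (fun i => ((μ (ν i) : ℂ)))
      = (Fintype.card G : ℝ) * (Fintype.card G : ℝ) / n := by
    intro μ
    rw [hFval (fun i => ((μ (ν i) : ℂ)))]
    have h2 : (∑ i, ‖(μ (ν i) : ℂ)‖ ^ 2) = (n : ℝ) := by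
      rw [Finset.sum_congr rfl fun i _ => by rw [hEabs]]
      simp
    have h1 : (∑ t : G, ‖(μ (ν (x t)) : ℂ)‖ ^ 2) = (Fintype.card G : ℝ) := by
      rw [Finset.sum_congr rfl fun t _ => by rw [hEabs]]
      simp
    rw [h1, h2, mul_div_assoc]
  set E : Finset (Fin n → ℂ) :=
    Finset.univ.image (fun μ : H →* ℂˣ => (fun i => ((μ (ν i) : ℂ)))) with hE
  have hfilter : Φ.filter (fun φ => ¬ ∀ μ : H →* ℂˣ, φ ≠ fun i => ((μ (ν i) : ℂ))) = E := by
    ext ψ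
    simp only [Finset.mem_filter, hE, Finset.mem_image, Finset.mem_univ, true_and,
      not_forall, not_not]
    constructor
    · rintro ⟨-, μ, hμ⟩; exact ⟨μ, hμ.symm⟩
    · rintro ⟨μ, hμ⟩; exact ⟨hμ ▸ hEis μ, μ, hμ.symm⟩
  have hEsum : ∑ φ ∈ E, F φ =
      (Fintype.card H : ℝ) * ((Fintype.card G : ℝ) * (Fintype.card G : ℝ) / n) := by
    rw [hE, Finset.sum_image (fun a _ b _ h => hinj h)]
    rw [Finset.sum_congr rfl fun μ _ => hEisSum μ]
    simp [Finset.card_univ, aux_card_dual H]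
  have hsplit := Finset.sum_filter_add_sum_filter_not Φ
    (fun φ => ∀ μ : H →* ℂˣ, φ ≠ fun i => ((μ (ν i) : ℂ))) F
  rw [hfilter, hEsum, htot] at hsplit
  have final : ∑ φ ∈ Φ.filter (fun φ => ∀ μ : H →* ℂˣ, φ ≠ fun i => ((μ (ν i) : ℂ))), F φ
      = (Fintype.card G : ℝ) ^ 2 * (1 - (Fintype.card H : ℝ) / n) := by
    have h3 : ∑ φ ∈ Φ.filter (fun φ => ∀ μ : H →* ℂˣ, φ ≠ fun i => ((μ (ν i) : ℂ))), F φ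
        = (Fintype.card G : ℝ) * (Fintype.card G : ℝ)
          - (Fintype.card H : ℝ) * ((Fintype.card G : ℝ) * (Fintype.card G : ℝ) / n) := by
      linarith
    rw [h3]
    field_simp
  exact final
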